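/- Let α > 0, c, d ∈ ℝ and define the set-valued map ∂f*(z) = {c} for z > (c−d)/α and ∂f*(z) = {αz + d} for z ≤ (c−d)/α. Then the graphical derivative of ∂f* at (v, ζ) ∈ graph(∂f*) in direction v̇ is: {0} if αv > c−d; {αv̇} if αv < c−d; {0} if αv = c−d and v̇ ≥ 0; {αv̇} if αv = c−d and v̇ < 0. -/

import Mathlib

open Filter

/-- If near `v` the map `s` satisfies `s (v + h) = ζ + φ h` for a continuous positively
homogeneous `φ`, then the graphical-derivative condition is `ζdot = φ vdot`. -/
private lemma aux_graph (s : ℝ → ℝ) (v ζ vdot ζdot : ℝ) (φ : ℝ → ℝ)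
    (hφ : Continuous φ)
    (hhom : ∀ r h : ℝ, 0 < r → φ (r * h) = r * φ h)
    (δ : ℝ) (hδ : 0 < δ)
    (hloc : ∀ h : ℝ, |h| < δ → s (v + h) = ζ + φ h) :
    (∃ τ : ℕ → ℝ, (∀ n, 0 < τ n) ∧ Filter.Tendsto τ Filter.atTop (nhds 0) ∧
      ∃ p : ℕ → ℝ × ℝ, (∀ n, (p n).2 = s (p n).1) ∧
        Filter.Tendsto (fun n => (τ n)⁻¹ • (p n - (v, ζ))) Filter.atTop (nhds (vdot, ζdot)))
    ↔ ζdot = φ vdot := by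
  have hball : ∀ᶠ x : ℝ in nhds 0, |x| < δ := by
    filter_upwards [Metric.ball_mem_nhds (0:ℝ) hδ] with x hx
    simpa [Real.dist_eq] using hx
  constructor
  · rintro ⟨τ, hτpos, hτ0, p, hp, hlim⟩
    have hne : ∀ n, τ n ≠ 0 := fun n => (hτpos n).ne'
    have hcomp : ∀ n, (τ n)⁻¹ • (p n - (v, ζ)) =
        ((τ n)⁻¹ * ((p n).1 - v), (τ n)⁻¹ * ((p n).2 - ζ)) := by
      intro n
      ext <;> simp [smul_eq_mul]
    set q : ℕ → ℝ := fun n => (τ n)⁻¹ * ((p n).1 - v) with hq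
    have h1 : Tendsto q atTop (nhds vdot) := by
      have := (continuous_fst.tendsto ((vdot, ζdot) : ℝ × ℝ)).comp hlim
      simpa [hcomp, Function.comp_def] using this
    have h2 : Tendsto (fun n => (τ n)⁻¹ * ((p n).2 - ζ)) atTop (nhds ζdot) := by
      have := (continuous_snd.tendsto ((vdot, ζdot) : ℝ × ℝ)).comp hlim
      simpa [hcomp, Function.comp_def] using this
    have hto0 : Tendsto (fun n => (p n).1 - v) atTop (nhds 0) := by
      have h := hτ0.mul h1
      rw [zero_mul] at h
      refine h.congr fun n => ?_
      simp only [hq]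
      exact mul_inv_cancel_left₀ (hne n) _
    have hev : ∀ᶠ n in atTop, |(p n).1 - v| < δ := hto0.eventually hball
    have h3 : Tendsto (fun n => φ (q n)) atTop (nhds (φ vdot)) :=
      (hφ.tendsto vdot).comp h1
    have heq : (fun n => (τ n)⁻¹ * ((p n).2 - ζ)) =ᶠ[atTop] fun n => φ (q n) := by
      filter_upwards [hev] with n hn
      have h4 : (p n).2 = ζ + φ ((p n).1 - v) := by
        have h := hloc ((p n).1 - v) hn
        rw [show v + ((p n).1 - v) = (p n).1 by ring] at h
        rw [hp n, h]
      have h5 : (p n).1 - v = τ n * q n := (mul_inv_cancel_left₀ (hne n) _).symm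
      rw [h4, show ζ + φ ((p n).1 - v) - ζ = φ ((p n).1 - v) by ring, h5,
        hhom _ _ (hτpos n)]
      exact inv_mul_cancel_left₀ (hne n) _
    exact tendsto_nhds_unique (h2.congr' heq) h3
  · intro hζdot
    refine ⟨fun n => ((n : ℝ) + 1)⁻¹, fun n => by positivity, ?_,
      fun n => (v + ((n : ℝ) + 1)⁻¹ * vdot, s (v + ((n : ℝ) + 1)⁻¹ * vdot)),
      fun n => rfl, ?_⟩
    · exact tendsto_one_div_add_atTop_nhds_zero_nat.congr fun n => (one_div _)
    · have hτ0 : Tendsto (fun n : ℕ => ((n : ℝ) + 1)⁻¹ * vdot) atTop (nhds 0) := by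
        have h := tendsto_one_div_add_atTop_nhds_zero_nat.mul_const vdot
        simpa [one_div] using h
      have hev : ∀ᶠ n : ℕ in atTop, |((n : ℝ) + 1)⁻¹ * vdot| < δ := hτ0.eventually hball
      have heq : (fun n : ℕ => (((n : ℝ) + 1)⁻¹)⁻¹ •
          (((v + ((n : ℝ) + 1)⁻¹ * vdot, s (v + ((n : ℝ) + 1)⁻¹ * vdot)) : ℝ × ℝ) - (v, ζ)))
          =ᶠ[atTop] fun _ => ((vdot, ζdot) : ℝ × ℝ) := by
        filter_upwards [hev] with n hn
        have hpos : (0:ℝ) < ((n : ℝ) + 1)⁻¹ := by positivity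
        have hne : ((n : ℝ) + 1) ≠ 0 := by positivity
        rw [hloc _ hn, hhom _ _ hpos]
        have hsub : ((v + ((n:ℝ)+1)⁻¹ * vdot, ζ + ((n:ℝ)+1)⁻¹ * φ vdot) : ℝ × ℝ) - (v, ζ)
            = ((n:ℝ)+1)⁻¹ • ((vdot, ζdot) : ℝ × ℝ) := by
          ext <;> simp [smul_eq_mul, hζdot]
        rw [hsub, smul_smul, inv_inv, mul_inv_cancel₀ hne, one_smul]
      exact tendsto_const_nhds.congr' heq.symm

/-- Graphical derivative of the piecewise-defined subdifferential `∂f*`. -/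
theorem stmt_17 (α c d : ℝ) (hα : 0 < α)
    (s : ℝ → ℝ) (hs : ∀ z : ℝ, s z = if (c - d) / α < z then c else α * z + d)
    (v ζ : ℝ) (hζ : ζ = s v) (vdot ζdot : ℝ) :
    (∃ τ : ℕ → ℝ, (∀ n, 0 < τ n) ∧ Filter.Tendsto τ Filter.atTop (nhds 0) ∧
      ∃ p : ℕ → ℝ × ℝ, (∀ n, (p n).2 = s (p n).1) ∧
        Filter.Tendsto (fun n => (τ n)⁻¹ • (p n - (v, ζ))) Filter.atTop (nhds (vdot, ζdot)))
    ↔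
    (if c - d < α * v then ζdot = 0
     else if α * v < c - d then ζdot = α * vdot
     else if 0 ≤ vdot then ζdot = 0 else ζdot = α * vdot) := by
  have hα' : α ≠ 0 := hα.ne'
  rcases lt_trichotomy ((c - d) / α) v with hv | hv | hv
  · -- case c - d < α * v : locally constant
    have hcd : c - d < α * v := by
      have := (div_lt_iff₀ hα).mp hv; linarith
    have hζc : ζ = c := by rw [hζ, hs v, if_pos hv]
    rw [aux_graph s v ζ vdot ζdot (fun _ => (0:ℝ)) continuous_const
      (fun r h hr => by ring) (v - (c - d) / α) (by linarith) ?_]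
    · simp [if_pos hcd]
    · intro h hh
      obtain ⟨hh1, hh2⟩ := abs_lt.mp hh
      rw [hs, if_pos (by linarith), hζc]
      ring
  · -- case α * v = c - d : kink point
    have hcd : c - d = α * v := by
      field_simp at hv
      linarith [hv]
    have hζv : ζ = α * v + d := by
      rw [hζ, hs v, if_neg (by rw [hv]; exact lt_irrefl v)]
    have hζc : ζ = c := by rw [hζv]; linarith
    rw [aux_graph s v ζ vdot ζdot (fun h => α * min h 0)
      (continuous_const.mul (continuous_id.min continuous_const))
      ?_ 1 one_pos ?_]
    · rw [if_neg (by linarith), if_neg (by linarith)]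
      rcases le_or_gt 0 vdot with h0 | h0
      · rw [if_pos h0]
        simp [min_eq_right h0]
      · rw [if_neg (not_le.mpr h0)]
        simp [min_eq_left h0.le]
    · intro r h hr
      have hmin : min (r * h) 0 = r * min h 0 := by
        rcases le_or_gt h 0 with h0 | h0
        · rw [min_eq_left (by nlinarith), min_eq_left h0]
        · rw [min_eq_right (by nlinarith), min_eq_right h0.le, mul_zero]
      simp only [hmin]
      ring
    · intro h _
      rcases lt_or_ge 0 h with h0 | h0
      · rw [hs, if_pos (by rw [hv]; linarith)]
        simp [min_eq_right h0.le, hζc]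
      · rw [hs, if_neg (by rw [hv]; intro hc; linarith), hζv]
        simp only [min_eq_left h0]
        ring
  · -- case α * v < c - d : locally affine
    have hcd : α * v < c - d := by
      have := (lt_div_iff₀ hα).mp hv; linarith
    have hζv : ζ = α * v + d := by
      rw [hζ, hs v, if_neg (not_lt.mpr hv.le)]
    rw [aux_graph s v ζ vdot ζdot (fun h => α * h) (continuous_const.mul continuous_id)
      (fun r h hr => by ring) ((c - d) / α - v) (by linarith) ?_]
    · rw [if_neg (by linarith), if_pos hcd]
    · intro h hh
      obtain ⟨hh1, hh2⟩ := abs_lt.mp hh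
      rw [hs, if_neg (by intro hc; linarith), hζv]
      ring
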